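/- arXiv:2406.09449 — 2 statements merged into one kernel-verified Lean document; each statement's English description precedes it below -/
import Mathlib

section
/- Let n ≥ 1 and let φ : S^n → ℝ be a smooth positive function satisfying the equation Δφ − (n/2)|Dφ|²/φ + (n/2)(φ − 1/φ) = φ⁻¹ f on the sphere S^n, where f : S^n → ℝ is smooth and positive. Then at a point x₁ where φ attains its maximum, φ(x₁)² ≥ (2/n) min f + 1, and at a point x₀ where φ attains its minimum, φ(x₀)² ≤ (2/n) max f + 1. In particular max φ > 1. -/
/-- a priori `C⁰` bounds at extremum points for solutions of the
Christoffel equation `Δφ − (n/2)|Dφ|²/φ + (n/2)(φ − 1/φ) = φ⁻¹ f` on `S^n`.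
The Laplacian `lapφ` and squared gradient norm `gradφsq` of `φ` are given as data,
together with the second-derivative test facts at extremum points. -/
theorem stmt_0 {n : ℕ} (hn : 1 ≤ n)
    (φ f lapφ gradφsq : (Metric.sphere (0 : EuclideanSpace ℝ (Fin (n+1))) 1) → ℝ)
    (hφpos : ∀ x, 0 < φ x) (hfpos : ∀ x, 0 < f x)
    (heq : ∀ x, lapφ x - (n / 2) * gradφsq x / φ x + (n / 2) * (φ x - 1 / φ x)
      = (φ x)⁻¹ * f x)
    (fmin fmax : ℝ)
    (hfmin : IsLeast (Set.range f) fmin) (hfmax : IsGreatest (Set.range f) fmax)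
    (x₁ x₀ : Metric.sphere (0 : EuclideanSpace ℝ (Fin (n+1))) 1)
    (hmax : ∀ x, φ x ≤ φ x₁) (hmin : ∀ x, φ x₀ ≤ φ x)
    (hlap₁ : lapφ x₁ ≤ 0) (hgrad₁ : gradφsq x₁ = 0)
    (hlap₀ : 0 ≤ lapφ x₀) (hgrad₀ : gradφsq x₀ = 0) :
    (2 / n : ℝ) * fmin + 1 ≤ (φ x₁) ^ 2 ∧ (φ x₀) ^ 2 ≤ (2 / n : ℝ) * fmax + 1 ∧
      1 < φ x₁ := by
  have hnpos : (0 : ℝ) < n := by exact_mod_cast Nat.lt_of_lt_of_le Nat.zero_lt_one hn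
  have ha := hφpos x₁
  have hb := hφpos x₀
  have h1 := heq x₁
  have h0 := heq x₀
  rw [hgrad₁] at h1
  rw [hgrad₀] at h0
  have hfmin1 : fmin ≤ f x₁ := hfmin.2 ⟨x₁, rfl⟩
  have hfmax0 : f x₀ ≤ fmax := hfmax.2 ⟨x₀, rfl⟩
  have hfminpos : 0 < fmin := by
    obtain ⟨x, hx⟩ := hfmin.1
    exact hx ▸ hfpos x
  have hane : φ x₁ ≠ 0 := ne_of_gt ha
  have hbne : φ x₀ ≠ 0 := ne_of_gt hb
  -- cleared-denominator forms of the equation at the two points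
  have E1 : φ x₁ * lapφ x₁ + (n / 2 : ℝ) * ((φ x₁) ^ 2 - 1) = f x₁ := by
    field_simp at h1
    nlinarith [h1, sq_nonneg (φ x₁)]
  have E0 : φ x₀ * lapφ x₀ + (n / 2 : ℝ) * ((φ x₀) ^ 2 - 1) = f x₀ := by
    field_simp at h0
    nlinarith [h0, sq_nonneg (φ x₀)]
  have k1 : 2 * fmin ≤ (n : ℝ) * ((φ x₁) ^ 2 - 1) := by
    nlinarith [mul_nonpos_of_nonneg_of_nonpos (le_of_lt ha) hlap₁]
  have k0 : (n : ℝ) * ((φ x₀) ^ 2 - 1) ≤ 2 * fmax := by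
    nlinarith [mul_nonneg (le_of_lt hb) hlap₀]
  have key1 : (2 / n : ℝ) * fmin + 1 ≤ (φ x₁) ^ 2 := by
    calc (2 / n : ℝ) * fmin + 1 = (2 * fmin) / n + 1 := by ring
      _ ≤ ((n : ℝ) * ((φ x₁) ^ 2 - 1)) / n + 1 := by
          gcongr
      _ = (φ x₁) ^ 2 := by field_simp; ring
  refine ⟨key1, ?_, ?_⟩
  · calc (φ x₀) ^ 2 = ((n : ℝ) * ((φ x₀) ^ 2 - 1)) / n + 1 := by field_simp; ring
      _ ≤ (2 * fmax) / n + 1 := by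
          gcongr
      _ = (2 / n : ℝ) * fmax + 1 := by ring
  · have h2 : 1 < (φ x₁) ^ 2 := by
      have : (0:ℝ) < (2 / n) * fmin := mul_pos (div_pos (by norm_num) hnpos) hfminpos
      linarith
    by_contra hc
    push_neg at hc
    have h3 : (φ x₁) ^ 2 ≤ 1 ^ 2 := pow_le_pow_left₀ ha.le hc 2
    rw [one_pow] at h3
    linarith
end

section
/- Let φ be a smooth positive function on S^n and fix x ∈ S^n with a local orthonormal frame in which the tensor U[φ] = D²φ − (1/2)(|Dφ|²/φ) g + (1/2)(φ − 1/φ) g is diagonal at x. Then for α ≠ i, the covariant derivatives satisfy U_{αα i} = U_{iαα} − (φ_i/φ) U_{ii} at x. -/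
/-- the commutation relation `U_{ααi} = U_{iαα} − (φ_i/φ)U_{ii}`
(for `α ≠ i`) for the covariant derivatives of
`U[φ] = D²φ − (1/2)(|Dφ|²/φ)g + (1/2)(φ−1/φ)g` at a point where `U` is
diagonal.  Here `d, d2, d3` are the components of the first, second and third
covariant derivatives of `φ` in a local orthonormal frame at the point, with
the Ricci identity of the round sphere and the symmetry of the Hessian as
hypotheses; `U2, U3` are the components of `U` and of its covariant
derivative. -/
theorem stmt_11 {n : ℕ} (φ0 : ℝ) (hφ : 0 < φ0)
    (d : Fin n → ℝ) (d2 : Fin n → Fin n → ℝ) (d3 : Fin n → Fin n → Fin n → ℝ)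
    (hsym3 : ∀ i j k, d3 i j k = d3 j i k)
    (hRicci : ∀ k j i, d3 k j i - d3 k i j
      = (if i = k then d j else 0) - (if j = k then d i else 0))
    (hdiag : ∀ i j, i ≠ j → d2 i j = 0)
    (U2 : Fin n → Fin n → ℝ)
    (hU2 : ∀ i j, U2 i j = d2 i j +
      (if i = j then -(1/2) * (∑ l, (d l) ^ 2) / φ0 + (1/2) * (φ0 - 1 / φ0) else 0))
    (U3 : Fin n → Fin n → Fin n → ℝ)
    (hU3 : ∀ a b k, U3 a b k = d3 a b k +
      (if a = b then
        -(∑ l, d l * d2 l k) / φ0 + (1/2) * (∑ l, (d l) ^ 2) * d k / φ0 ^ 2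
          + (1/2) * (d k + d k / φ0 ^ 2)
       else 0)) :
    ∀ α i, α ≠ i → U3 α α i = U3 i α α - (d i / φ0) * U2 i i := by
  intro α i h
  have hφ0 : φ0 ≠ 0 := ne_of_gt hφ
  have hs : (∑ l, d l * d2 l i) = d i * d2 i i := by
    apply Finset.sum_eq_single
    · intro b _ hb; rw [hdiag b i hb]; ring
    · intro hi; simp at hi
  have hR := hRicci α α i
  rw [hsym3 α i α] at hR
  rw [hU3, hU3, hU2, hs]
  simp only [if_pos rfl, if_neg h, if_neg (Ne.symm h), eq_self_iff_true, if_true] at hR ⊢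
  field_simp
  linear_combination (2*φ0^2) * hR
end
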